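/- Fix finite sets of oracles and seeds, a deterministic function G mapping an oracle H ∈ Func and seed s to an output g and a transcript τ (a partial function recording queries of G and H's answers, so H extends τ). Fix an output g₀ and a partial function h₀ such that some pair (H,s) with H extending h₀ satisfies G(H,s) = (g₀, ·). Suppose G's computation on (H,s) depends only on the restriction of H to the domain of its transcript (i.e., if G(H₀,s)=(g,τ) and H₁ agrees with H₀ on the domain of τ, then G(H₁,s)=(g,τ)). Then the following two distributions on total functions are identical: (a) sample H uniformly from the set of functions extending h₀ conditioned on the event that a uniformly random seed s yields output g₀; (b) sample a transcript τ from the conditional distribution of transcripts given output g₀ and given that the oracle extends h₀, independently sample H uniformly among functions extending h₀, and output H reprogrammed to agree with τ on the domain of τ. -/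

import Mathlib

open scoped Classical

/-- `Extends H h` : the total function `H` agrees with the partial function
`h` wherever `h` is defined. -/
def Extends {X Y : Type*} (H : X → Y) (h : X → Option Y) : Prop :=
  ∀ x y, h x = some y → H x = y

/-- `reprog H τ` : the function `H` reprogrammed to agree with the partial
function `τ` on its domain. -/
def reprog {X Y : Type*} (H : X → Y) (τ : X → Option Y) : X → Y :=
  fun x => (τ x).getD (H x)

/-- Resampling lemma: the conditional distribution of the oracle given output
g₀ and extension of h₀ coincides with: sampling a transcript τ from the
conditional transcript distribution, sampling a fresh uniform oracle extending
h₀, and reprogramming it along τ.  Both probabilities are expressed after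
clearing the common denominators |A|·|Ext|. -/
theorem stmt_3 {X Y S O : Type*} [Fintype X] [Fintype Y] [Fintype S] [DecidableEq Y]
    (G : (X → Y) → S → O × (X → Option Y))
    (hloc : ∀ (H₀ H₁ : X → Y) (s : S),
      (∀ x, (G H₀ s).2 x ≠ none → H₁ x = H₀ x) → G H₁ s = G H₀ s)
    (htrans : ∀ (H : X → Y) (s : S) (x : X) (y : Y), (G H s).2 x = some y → H x = y)
    (g₀ : O) (h₀ : X → Option Y)
    (hne : ∃ (H : X → Y) (s : S), Extends H h₀ ∧ (G H s).1 = g₀)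
    (A : Finset ((X → Y) × S))
    (hA : A = Finset.univ.filter (fun p => Extends p.1 h₀ ∧ (G p.1 p.2).1 = g₀))
    (Ext : Finset (X → Y))
    (hExt : Ext = Finset.univ.filter (fun H => Extends H h₀)) :
    ∀ Hstar : X → Y,
      (A.filter (fun p => p.1 = Hstar)).card * Ext.card =
        ∑ p ∈ A, (Ext.filter (fun H' => reprog H' ((G p.1 p.2).2) = Hstar)).card := by
  intro Hstar
  classical
  -- G is unchanged by reprogramming along its own transcript
  have L1 : ∀ (H H' : X → Y) (s : S), G (reprog H' (G H s).2) s = G H s := by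
    intro H H' s
    apply hloc
    intro x hx
    cases hτ : (G H s).2 x with
    | none => exact absurd hτ hx
    | some y => simp [reprog, hτ, htrans H s x y hτ]
  -- express LHS as a product card, RHS as a filtered product card
  have hL : (A.filter (fun p => p.1 = Hstar)).card * Ext.card
      = ((A.filter (fun p => p.1 = Hstar)) ×ˢ Ext).card := (Finset.card_product _ _).symm
  have hR : ∑ p ∈ A, (Ext.filter (fun H' => reprog H' ((G p.1 p.2).2) = Hstar)).card
      = ((A ×ˢ Ext).filter
          (fun q => reprog q.2 ((G q.1.1 q.1.2).2) = Hstar)).card := by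
    rw [Finset.card_filter, Finset.sum_product]
    refine Finset.sum_congr rfl fun p _ => ?_
    rw [Finset.card_filter]
  rw [hL, hR]
  -- the swap map (an "involution" between the two sides)
  set Φ : ((X → Y) × S) × (X → Y) → ((X → Y) × S) × (X → Y) :=
    fun q => ((reprog q.2 ((G q.1.1 q.1.2).2), q.1.2),
      fun x => if (G q.1.1 q.1.2).2 x = none then q.1.1 x else q.2 x) with hΦ
  have memA : ∀ p : (X → Y) × S, p ∈ A ↔ Extends p.1 h₀ ∧ (G p.1 p.2).1 = g₀ := by
    intro p; simp [hA]
  have memE : ∀ H : X → Y, H ∈ Ext ↔ Extends H h₀ := by intro H; simp [hExt]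
  -- basic extension facts
  have extReprog : ∀ (H H' : X → Y) (s : S), Extends H h₀ → Extends H' h₀ →
      Extends (reprog H' (G H s).2) h₀ := by
    intro H H' s hH hH' x y hxy
    cases hτ : (G H s).2 x with
    | none => simpa [reprog, hτ] using hH' x y hxy
    | some z =>
      have := htrans H s x z hτ
      simp only [reprog, hτ, Option.getD_some]
      rw [← this]; exact hH x y hxy
  have extMix : ∀ (H H' : X → Y) (s : S), Extends H h₀ → Extends H' h₀ →
      Extends (fun x => if (G H s).2 x = none then H x else H' x) h₀ := by
    intro H H' s hH hH' x y hxy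
    by_cases hτ : (G H s).2 x = none <;> simp [hτ, hH x y hxy, hH' x y hxy]
  -- Φ(Φ q) = q whenever it makes sense
  have inv : ∀ q : ((X → Y) × S) × (X → Y), Φ (Φ q) = q := by
    intro q
    obtain ⟨⟨H, s⟩, H'⟩ := q
    have hG : G (reprog H' (G H s).2) s = G H s := L1 H H' s
    simp only [hΦ, hG]
    refine Prod.ext (Prod.ext ?_ rfl) ?_
    · funext x
      cases hτ : (G H s).2 x with
      | none => simp [reprog, hτ]
      | some y => simp [reprog, hτ, (htrans H s x y hτ).symm]
    · funext x
      cases hτ : (G H s).2 x with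
      | none => simp [reprog, hτ]
      | some y => simp [hτ]
  refine Finset.card_nbij' Φ Φ ?_ ?_ (fun q _ => inv q) (fun q _ => inv q)
  · -- left to right
    rintro ⟨⟨H, s⟩, H'⟩ hq
    simp only [Finset.mem_coe, Finset.mem_product, Finset.mem_filter] at hq
    obtain ⟨⟨hpA, hp1⟩, hH'⟩ := hq
    rw [memA] at hpA
    rw [memE] at hH'
    have hG : G (reprog H' (G H s).2) s = G H s := L1 H H' s
    simp only [Finset.mem_coe, Finset.mem_filter, Finset.mem_product, hΦ]
    refine ⟨⟨?_, ?_⟩, ?_⟩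
    · rw [memA]
      exact ⟨extReprog H H' s hpA.1 hH', by rw [hG]; exact hpA.2⟩
    · rw [memE]; exact extMix H H' s hpA.1 hH'
    · -- reprog (mix) (transcript of reprog H' τ) = Hstar
      rw [hG]
      funext x
      cases hτ : (G H s).2 x with
      | none => simpa [reprog, hτ] using congrFun hp1 x
      | some y =>
        simp only [reprog, hτ, Option.getD_some]
        rw [← htrans H s x y hτ]
        exact congrFun hp1 x
  · -- right to left
    rintro ⟨⟨H, s⟩, H'⟩ hq
    simp only [Finset.mem_coe, Finset.mem_filter, Finset.mem_product] at hq
    obtain ⟨⟨hpA, hH'⟩, hrep⟩ := hq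
    rw [memA] at hpA
    rw [memE] at hH'
    have hG : G (reprog H' (G H s).2) s = G H s := L1 H H' s
    simp only [Finset.mem_coe, Finset.mem_product, Finset.mem_filter, hΦ]
    refine ⟨⟨?_, hrep⟩, ?_⟩
    · rw [memA]
      exact ⟨extReprog H H' s hpA.1 hH', by rw [hG]; exact hpA.2⟩
    · rw [memE]; exact extMix H H' s hpA.1 hH'
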